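/- Define S_m = D_{m+1} − D_m. Then for every m ≥ 0 and every k with 0 < k < p: S_{pm+k} = p − k − 1 − 𝟙{S_m < p−1−k}, where 𝟙{·} is the indicator (equal to 1 if the condition holds and 0 otherwise). -/

import Mathlib

open MeasureTheory
open scoped NNReal ENNReal

namespace Chacon

/-- The space of digit sequences with digits in `{0, …, p-1}`. -/
def Gamma (p : ℕ) : Set (ℕ → ℕ) := {x | ∀ i, x i < p}

/-- `Γ*`: sequences with digits `< p` having infinitely many coordinates `≠ p - 1`. -/
def GammaStar (p : ℕ) : Set (ℕ → ℕ) :=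
  {x | (∀ i, x i < p) ∧ {i | x i ≠ p - 1}.Infinite}

/-- The least index `i` with `x i ≠ p - 1`. -/
noncomputable def firstNot (p : ℕ) (x : ℕ → ℕ) : ℕ :=
  sInf {i | x i ≠ p - 1}

/-- `φ(x) = x_i` where `i` is the least index with `x_i ≠ p - 1`. -/
noncomputable def phi (p : ℕ) (x : ℕ → ℕ) : ℕ :=
  x (firstNot p x)

/-- The odometer `S` (addition of `1` with carry): the initial run of digits
`p - 1` is replaced by zeros, and the first digit `≠ p - 1` is increased by one. -/
noncomputable def odo (p : ℕ) (x : ℕ → ℕ) : ℕ → ℕ :=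
  fun i =>
    if i < firstNot p x then 0
    else if i = firstNot p x then x i + 1
    else x i

/-- `φ^(m)(x) = ∑_{j=0}^{m-1} φ(S^j x)`. -/
noncomputable def phiSum (p m : ℕ) (x : ℕ → ℕ) : ℕ :=
  ∑ j ∈ Finset.range m, phi p ((odo p)^[j] x)

/-- The base-`p` digit sequence of a real number `u`. -/
noncomputable def digitsOf (p : ℕ) (u : ℝ) : ℕ → ℕ :=
  fun i => (⌊u * (p : ℝ) ^ (i + 1)⌋).toNat % p

/-- `λ`: the product probability measure on digit sequences under which the
coordinates are i.i.d., uniformly distributed in `{0, …, p-1}`; it is realized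
concretely as the distribution of the base-`p` digit sequence of a uniformly
distributed random point of `[0,1)`. -/
noncomputable def lam (p : ℕ) : Measure (ℕ → ℕ) :=
  Measure.map (digitsOf p) (volume.restrict (Set.Ico (0 : ℝ) 1))

/-- `π_m(j) = λ({x : φ^(m)(x) = j})`. -/
noncomputable def pim (p m j : ℕ) : ℝ≥0∞ :=
  lam p {x | phiSum p m x = j}

/-- `P_m^p(t) = ∑_{j ≥ 0} π_m(j) t^j`, a real polynomial
(the sum is over `0 ≤ j ≤ m (p-2)` since `0 ≤ φ^(m) ≤ m (p-2)` a.s.). -/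
noncomputable def P (p m : ℕ) (t : ℝ) : ℝ :=
  ∑ j ∈ Finset.range (m * (p - 2) + 1), (pim p m j).toReal * t ^ j

/-- The `n`-th triangular number `Δ_n = n (n+1) / 2`. -/
def tri (n : ℕ) : ℕ := n * (n + 1) / 2

/-- The degree `D_m` of `P_m^p`: the largest `j` with `π_m(j) ≠ 0`. -/
noncomputable def D (p m : ℕ) : ℕ := sSup {j | pim p m j ≠ 0}

/-- The lower degree `d_m` of `P_m^p`: the least `j` with `π_m(j) ≠ 0`. -/
noncomputable def d (p m : ℕ) : ℕ := sInf {j | pim p m j ≠ 0}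


/-- `S_m = D_{m+1} - D_m`. -/
noncomputable def Sseq (p m : ℕ) : ℕ := D p (m + 1) - D p m

/-- lowest non-(p-1) base-p digit of n -/
def fd (p n : ℕ) : ℕ :=
  if h : 2 ≤ p ∧ n % p = p - 1 then
    fd p (n / p)
  else n % p
decreasing_by
  have h1 : 0 < n := by
    rcases h with ⟨hp, hm⟩
    rcases Nat.eq_zero_or_pos n with h0 | h0
    · subst h0; simp at hm; omega
    · exact h0
  exact Nat.div_lt_self h1 h.1

theorem fd_of_ne {p n : ℕ} (h : n % p ≠ p - 1) : fd p n = n % p := by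
  rw [fd]; simp [h]

theorem fd_of_eq {p n : ℕ} (hp : 2 ≤ p) (h : n % p = p - 1) : fd p n = fd p (n / p) := by
  rw [fd]; simp [h, hp]

theorem fd_le {p : ℕ} (hp : 2 ≤ p) (n : ℕ) : fd p n ≤ p - 2 := by
  induction n using Nat.strong_induction_on with
  | _ n ih =>
    by_cases h : n % p = p - 1
    · rw [fd_of_eq hp h]
      have h1 : 0 < n := by
        rcases Nat.eq_zero_or_pos n with h0 | h0
        · subst h0; simp at h; omega
        · exact h0
      exact ih (n / p) (Nat.div_lt_self h1 hp)
    · rw [fd_of_ne h]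
      have := Nat.mod_lt n (show 0 < p by omega)
      omega

/-- sum of fd over the interval [a, a+n) -/
noncomputable def gsum (p a n : ℕ) : ℕ := ∑ j ∈ Finset.range n, fd p (a + j)

theorem tri_eq (n : ℕ) : tri n = ∑ i ∈ Finset.range (n + 1), i := by
  rw [Finset.sum_range_id]; simp [tri]; ring_nf

/-- digit and div of a+j within one block -/
theorem add_mod_block {p a j : ℕ} (hp : 0 < p) (hj : j < p) :
    ((a % p + j < p) → (a + j) % p = a % p + j ∧ (a + j) / p = a / p)
    ∧ ((p ≤ a % p + j) → (a + j) % p = a % p + j - p ∧ (a + j) / p = a / p + 1) := by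
  have hd : a = p * (a / p) + a % p := (Nat.div_add_mod a p).symm
  have hr : a % p < p := Nat.mod_lt _ hp
  constructor
  · intro h
    have h1 : a + j = (a % p + j) + p * (a / p) := by omega
    rw [h1, Nat.add_mul_mod_self_left, Nat.add_mul_div_left _ _ hp,
      Nat.mod_eq_of_lt h, Nat.div_eq_of_lt h]
    omega
  · intro h
    have h1 : a + j = (a % p + j - p) + p * (a / p + 1) := by
      rw [Nat.mul_succ]; omega
    rw [h1, Nat.add_mul_mod_self_left, Nat.add_mul_div_left _ _ hp,
      Nat.mod_eq_of_lt (by omega), Nat.div_eq_of_lt (by omega)]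
    omega

theorem block {p : ℕ} (hp : 2 ≤ p) (a : ℕ) :
    ∑ j ∈ Finset.range p, fd p (a + j) = tri (p - 2) + fd p (a / p) := by
  have hp0 : 0 < p := by omega
  have key : ∑ j ∈ Finset.range p, fd p (a + j)
      = ∑ c ∈ Finset.range p, (if c = p - 1 then fd p (a / p) else c) := by
    apply Finset.sum_nbij' (fun j => (a + j) % p) (fun c => (c + p - a % p) % p)
    · intro j _; exact Finset.mem_range.mpr (Nat.mod_lt _ hp0)
    · intro c _; exact Finset.mem_range.mpr (Nat.mod_lt _ hp0)
    · intro j hj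
      have hj' : j < p := Finset.mem_range.mp hj
      have hr : a % p < p := Nat.mod_lt _ hp0
      rcases Nat.lt_or_ge (a % p + j) p with h | h
      · rw [((add_mod_block hp0 hj').1 h).1]
        have : a % p + j + p - a % p = j + p := by omega
        rw [this, Nat.add_mod_right, Nat.mod_eq_of_lt hj']
      · rw [((add_mod_block hp0 hj').2 h).1]
        have : a % p + j - p + p - a % p = j := by omega
        rw [this, Nat.mod_eq_of_lt hj']
    · intro c hc
      have hc' : c < p := Finset.mem_range.mp hc
      have hr : a % p < p := Nat.mod_lt _ hp0
      have hd : a = p * (a / p) + a % p := (Nat.div_add_mod a p).symm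
      have hx : a + (c + p - a % p) = c + p * (a / p) + p := by omega
      rw [Nat.add_mod_mod, hx, Nat.add_mod_right, Nat.add_mul_mod_self_left,
        Nat.mod_eq_of_lt hc']
    · intro j hj
      have hj' : j < p := Finset.mem_range.mp hj
      by_cases h : (a + j) % p = p - 1
      · rw [if_pos h, fd_of_eq hp h]
        congr 1
        rcases Nat.lt_or_ge (a % p + j) p with h2 | h2
        · exact ((add_mod_block hp0 hj').1 h2).2
        · exfalso
          have := ((add_mod_block hp0 hj').2 h2).1
          have hr : a % p < p := Nat.mod_lt _ hp0
          omega
      · rw [if_neg h, fd_of_ne h]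
  rw [key]
  have h4 : Finset.range p = Finset.range ((p - 1) + 1) := by
    congr 1; omega
  rw [h4, Finset.sum_range_succ, if_pos rfl]
  have h2 : ∀ c ∈ Finset.range (p - 1), (if c = p - 1 then fd p (a / p) else c) = c := by
    intro c hc; rw [if_neg]; have := Finset.mem_range.mp hc; omega
  rw [Finset.sum_congr rfl h2]
  have h5 : p - 1 = (p - 2) + 1 := by omega
  rw [h5, ← tri_eq]

theorem gsum_key {p : ℕ} (hp : 2 ≤ p) (a k : ℕ) :
    ∀ n, gsum p a (k + p * n) = gsum p a k + n * tri (p - 2) + gsum p ((a + k) / p) n := by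
  intro n
  induction n with
  | zero => simp [gsum]
  | succ n ih =>
    have h1 : k + p * (n + 1) = (k + p * n) + p := by ring
    rw [h1]
    unfold gsum at *
    rw [Finset.sum_range_add, ih, Finset.sum_range_succ]
    have h2 : ∀ j, a + (k + p * n + j) = (a + k + p * n) + j := by intro j; ring
    have h3 : ∑ x ∈ Finset.range p, fd p (a + (k + p * n + x))
        = tri (p - 2) + fd p ((a + k + p * n) / p) := by
      rw [Finset.sum_congr rfl (fun j _ => by rw [h2 j]), block hp]
    rw [h3]
    have h4 : (a + k + p * n) / p = (a + k) / p + n := by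
      rw [Nat.add_mul_div_left _ _ (by omega : 0 < p)]
    rw [h4]
    ring

theorem gsum_succ' (p a n : ℕ) : gsum p a (n + 1) = fd p a + gsum p (a + 1) n := by
  unfold gsum
  rw [Finset.sum_range_succ']
  simp [add_comm, add_assoc, add_left_comm]

theorem gsum_le {p : ℕ} (hp : 2 ≤ p) (a n : ℕ) : gsum p a n ≤ n * (p - 2) := by
  unfold gsum
  calc ∑ j ∈ Finset.range n, fd p (a + j) ≤ ∑ _j ∈ Finset.range n, (p - 2) :=
        Finset.sum_le_sum (fun j _ => fd_le hp _)
    _ = n * (p - 2) := by simp [mul_comm]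

/-- maximum of gsum over all starting points -/
noncomputable def Mx (p n : ℕ) : ℕ := sSup (Set.range fun a => gsum p a n)

theorem Mx_spec {p : ℕ} (hp : 2 ≤ p) (n : ℕ) :
    (∃ a, gsum p a n = Mx p n) ∧ ∀ a, gsum p a n ≤ Mx p n := by
  have hbdd : BddAbove (Set.range fun a => gsum p a n) := by
    refine ⟨n * (p - 2), ?_⟩
    rintro x ⟨a, rfl⟩
    exact gsum_le hp a n
  have hne : (Set.range fun a => gsum p a n).Nonempty := ⟨gsum p 0 n, 0, rfl⟩
  constructor
  · obtain ⟨a, ha⟩ := Nat.sSup_mem hne hbdd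
    exact ⟨a, ha⟩
  · intro a
    exact le_csSup hbdd ⟨a, rfl⟩

theorem Mx_mono {p : ℕ} (hp : 2 ≤ p) (n : ℕ) : Mx p n ≤ Mx p (n + 1) := by
  obtain ⟨⟨a, ha⟩, _⟩ := Mx_spec hp n
  calc Mx p n = gsum p a n := ha.symm
    _ ≤ gsum p a (n + 1) := by
        unfold gsum; rw [Finset.sum_range_succ]; omega
    _ ≤ Mx p (n + 1) := (Mx_spec hp (n + 1)).2 a

/-- sum of the k-1 largest digits below p-1 -/
noncomputable def betap (p k : ℕ) : ℕ := ∑ c ∈ Finset.Ico (p - k) (p - 1), c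

theorem Mx_le {p : ℕ} {n c : ℕ} (h : ∀ a, gsum p a n ≤ c) : Mx p n ≤ c :=
  csSup_le ⟨gsum p 0 n, 0, rfl⟩ (by rintro x ⟨a, rfl⟩; exact h a)

theorem le_Mx {p : ℕ} (hp : 2 ≤ p) (a n : ℕ) : gsum p a n ≤ Mx p n :=
  (Mx_spec hp n).2 a

theorem fd_mul_add {p : ℕ} (a₀ r : ℕ) (hr : r < p) (hne : r ≠ p - 1) :
    fd p (p * a₀ + r) = r := by
  rw [fd_of_ne, Nat.mul_add_mod, Nat.mod_eq_of_lt hr]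
  rw [Nat.mul_add_mod, Nat.mod_eq_of_lt hr]; exact hne

theorem fd_mul_add_top {p : ℕ} (hp : 2 ≤ p) (a₀ : ℕ) :
    fd p (p * a₀ + (p - 1)) = fd p a₀ := by
  have h1 : (p * a₀ + (p - 1)) % p = p - 1 := by
    rw [Nat.mul_add_mod, Nat.mod_eq_of_lt (by omega)]
  rw [fd_of_eq hp h1, Nat.mul_add_div (by omega), Nat.div_eq_of_lt (by omega), Nat.add_zero]

theorem div_mul_add {p : ℕ} (hp : 2 ≤ p) (a₀ r : ℕ) (hr : r < p) :
    (p * a₀ + r) / p = a₀ ∧ (p * a₀ + r) % p = r := by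
  rw [Nat.mul_add_div (by omega), Nat.div_eq_of_lt hr, Nat.mul_add_mod, Nat.mod_eq_of_lt hr]
  omega

theorem sum_c_add (c k : ℕ) : ∑ j ∈ Finset.range k, (c + j) = ∑ x ∈ Finset.Ico c (c + k), x := by
  rw [Finset.sum_Ico_eq_sum_range]
  simp

theorem betap_sum {p k : ℕ} (hp : 2 ≤ p) (hk1 : 1 ≤ k) (hk2 : k ≤ p - 1) :
    ∑ j ∈ Finset.range k, (p - 1 - k + j) = betap p k + (p - 1 - k) := by
  rw [sum_c_add]
  have h1 : p - 1 - k + k = p - 1 := by omega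
  rw [h1]
  have h2 : Finset.Ico (p - 1 - k) (p - 1) = insert (p - 1 - k) (Finset.Ico (p - k) (p - 1)) := by
    rw [show p - k = (p - 1 - k) + 1 from by omega, Finset.Ico_add_one_left_eq_Ioo,
      Finset.Ioo_insert_left (show p - 1 - k < p - 1 from by omega)]
  rw [h2, Finset.sum_insert (by simp [Finset.mem_Ico]; omega)]
  unfold betap
  omega

theorem betap_sum' {p k : ℕ} (hp : 2 ≤ p) (hk1 : 1 ≤ k) (hk2 : k ≤ p - 1) :
    ∑ j ∈ Finset.range (k - 1), (p - k + j) = betap p k := by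
  rw [sum_c_add]
  have h1 : p - k + (k - 1) = p - 1 := by omega
  rw [h1]; rfl

theorem formulaB {p : ℕ} (hp : 2 ≤ p) (n : ℕ) :
    Mx p (p * n) = n * tri (p - 2) + Mx p n := by
  have hkey : ∀ a, gsum p a (p * n) = n * tri (p - 2) + gsum p (a / p) n := by
    intro a
    have := gsum_key hp a 0 n
    simpa [gsum] using this
  apply le_antisymm
  · apply Mx_le
    intro a
    rw [hkey a]
    exact Nat.add_le_add_left (le_Mx hp _ n) _
  · obtain ⟨⟨a, ha⟩, _⟩ := Mx_spec hp n
    calc n * tri (p - 2) + Mx p n = gsum p (p * a) (p * n) := by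
          rw [hkey (p * a), Nat.mul_div_cancel_left _ (by omega : 0 < p), ha]
      _ ≤ Mx p (p * n) := le_Mx hp _ _

theorem formulaA {p : ℕ} (hp : 3 ≤ p) (n k : ℕ) (hk1 : 1 ≤ k) (hk2 : k ≤ p - 1) :
    Mx p (p * n + k) = n * tri (p - 2) + betap p k
      + max (Mx p n + (p - 1 - k)) (Mx p (n + 1)) := by
  have hp2 : 2 ≤ p := by omega
  have hp0 : 0 < p := by omega
  have hkey : ∀ a, gsum p a (p * n + k)
      = gsum p a k + n * tri (p - 2) + gsum p ((a + k) / p) n := by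
    intro a
    have := gsum_key hp2 a k n
    rwa [Nat.add_comm k (p * n)] at this
  apply le_antisymm
  · apply Mx_le
    intro a
    rw [hkey a]
    have hr : a % p < p := Nat.mod_lt _ hp0
    rcases Nat.lt_or_ge (a % p + k) p with hcase | hcase
    · -- no wrap
      have hdiv : (a + k) / p = a / p := ((add_mod_block hp0 (by omega)).1 hcase).2
      have hgs : gsum p a k ≤ betap p k + (p - 1 - k) := by
        unfold gsum
        calc ∑ j ∈ Finset.range k, fd p (a + j) ≤ ∑ j ∈ Finset.range k, (p - 1 - k + j) := by
              apply Finset.sum_le_sum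
              intro j hj
              have hj' : j < k := Finset.mem_range.mp hj
              have h1 := (add_mod_block hp0 (show j < p by omega)).1 (show a % p + j < p by omega)
              have : fd p (a + j) = a % p + j := by
                rw [fd_of_ne (show (a + j) % p ≠ p - 1 from by rw [h1.1]; omega), h1.1]
              omega
          _ = betap p k + (p - 1 - k) := betap_sum hp2 hk1 hk2
      have := le_Mx hp2 (a / p) n
      rw [hdiv]
      have hmax : Mx p n + (p - 1 - k) ≤ max (Mx p n + (p - 1 - k)) (Mx p (n + 1)) := le_max_left _ _
      omega
    · -- wrap
      have hdiv : (a + k) / p = a / p + 1 := ((add_mod_block hp0 (by omega)).2 hcase).2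
      have hgs : gsum p a k ≤ betap p k + fd p (a / p) := by
        set r := a % p with hrdef
        set js := p - 1 - r with hjsdef
        have hjs : js < k := by omega
        have hsplit : gsum p a k = (∑ j ∈ Finset.range js, fd p (a + j)) + fd p (a + js)
            + ∑ i ∈ Finset.range (k - js - 1), fd p (a + (js + 1 + i)) := by
          unfold gsum
          rw [show Finset.range k = Finset.range ((js + 1) + (k - js - 1)) from by congr 1; omega,
            Finset.sum_range_add, Finset.sum_range_succ]
        have e1 : ∀ j ∈ Finset.range js, fd p (a + j) = r + j := by
          intro j hj
          have hj' : j < js := Finset.mem_range.mp hj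
          have h1 := (add_mod_block hp0 (show j < p from by omega)).1 (show a % p + j < p from by omega)
          rw [fd_of_ne (show (a + j) % p ≠ p - 1 from by rw [h1.1]; omega), h1.1]
        have e2 : fd p (a + js) = fd p (a / p) := by
          have h1 := (add_mod_block hp0 (show js < p from by omega)).1 (show a % p + js < p from by omega)
          rw [fd_of_eq hp2 (show (a + js) % p = p - 1 from by rw [h1.1]; omega), h1.2]
        have e3 : ∀ i ∈ Finset.range (k - js - 1), fd p (a + (js + 1 + i)) = i := by
          intro i hi
          have hi' : i < k - js - 1 := Finset.mem_range.mp hi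
          have h1 := (add_mod_block hp0 (show js + 1 + i < p from by omega)).2
            (show p ≤ a % p + (js + 1 + i) from by omega)
          rw [fd_of_ne (show (a + (js + 1 + i)) % p ≠ p - 1 from by rw [h1.1]; omega), h1.1]
          omega
        have s1 : ∑ j ∈ Finset.range js, fd p (a + j) = ∑ j ∈ Finset.range js, (r + j) :=
          Finset.sum_congr rfl e1
        have s3 : ∑ i ∈ Finset.range (k - js - 1), fd p (a + (js + 1 + i))
            = ∑ i ∈ Finset.range (k - js - 1), i := Finset.sum_congr rfl e3
        have hb : (∑ j ∈ Finset.range js, (r + j)) + ∑ i ∈ Finset.range (k - js - 1), i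
            ≤ betap p k := by
          have t1 : ∑ j ∈ Finset.range js, (r + j) = ∑ x ∈ Finset.Ico r (p - 1), x := by
            rw [sum_c_add, show r + js = p - 1 from by omega]
          have t2 : ∑ i ∈ Finset.range (k - js - 1), i
              ≤ ∑ i ∈ Finset.range (k - js - 1), (p - k + i) :=
            Finset.sum_le_sum (fun i _ => by omega)
          have t3 : ∑ i ∈ Finset.range (k - js - 1), (p - k + i) = ∑ x ∈ Finset.Ico (p - k) r, x := by
            rw [sum_c_add, show p - k + (k - js - 1) = r from by omega]
          have t4 : (∑ x ∈ Finset.Ico (p - k) r, x) + ∑ x ∈ Finset.Ico r (p - 1), x = betap p k := by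
            unfold betap
            exact Finset.sum_Ico_consecutive _ (by omega) (by omega)
          omega
        omega
      have h2 : fd p (a / p) + gsum p (a / p + 1) n = gsum p (a / p) (n + 1) := (gsum_succ' p (a / p) n).symm
      have h3 := le_Mx hp2 (a / p) (n + 1)
      rw [hdiv]
      have hmax : Mx p (n + 1) ≤ max (Mx p n + (p - 1 - k)) (Mx p (n + 1)) := le_max_right _ _
      omega
  · -- ≥ : two witnesses
    have wit1 : n * tri (p - 2) + betap p k + (Mx p n + (p - 1 - k)) ≤ Mx p (p * n + k) := by
      obtain ⟨⟨a₀, ha₀⟩, _⟩ := Mx_spec hp2 n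
      set a := p * a₀ + (p - 1 - k) with hadef
      have hak : a + k = p * a₀ + (p - 1) := by omega
      have hdiv : (a + k) / p = a₀ := by
        rw [hak, (div_mul_add hp2 a₀ (p - 1) (by omega)).1]
      have hgs : gsum p a k = betap p k + (p - 1 - k) := by
        unfold gsum
        have : ∀ j ∈ Finset.range k, fd p (a + j) = p - 1 - k + j := by
          intro j hj
          have hj' : j < k := Finset.mem_range.mp hj
          have : a + j = p * a₀ + (p - 1 - k + j) := by omega
          rw [this, fd_mul_add a₀ _ (by omega) (by omega)]
        rw [Finset.sum_congr rfl this, betap_sum hp2 hk1 hk2]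
      calc n * tri (p - 2) + betap p k + (Mx p n + (p - 1 - k))
          = gsum p a k + n * tri (p - 2) + gsum p ((a + k) / p) n := by
            rw [hgs, hdiv, ha₀]; ring
        _ = gsum p a (p * n + k) := (hkey a).symm
        _ ≤ Mx p (p * n + k) := le_Mx hp2 _ _
    have wit2 : n * tri (p - 2) + betap p k + Mx p (n + 1) ≤ Mx p (p * n + k) := by
      obtain ⟨⟨a₀, ha₀⟩, _⟩ := Mx_spec hp2 (n + 1)
      set a := p * a₀ + (p - k) with hadef
      have hak : a + k = p * (a₀ + 1) := by rw [Nat.mul_succ]; omega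
      have hdiv : (a + k) / p = a₀ + 1 := by
        rw [hak, Nat.mul_div_cancel_left _ hp0]
      have hgs : gsum p a k = betap p k + fd p a₀ := by
        unfold gsum
        have hk' : k = (k - 1) + 1 := by omega
        rw [show Finset.range k = Finset.range ((k - 1) + 1) from by rw [← hk']]
        rw [Finset.sum_range_succ]
        have e1 : ∀ j ∈ Finset.range (k - 1), fd p (a + j) = p - k + j := by
          intro j hj
          have hj' : j < k - 1 := Finset.mem_range.mp hj
          have : a + j = p * a₀ + (p - k + j) := by omega
          rw [this, fd_mul_add a₀ _ (by omega) (by omega)]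
        have e2 : a + (k - 1) = p * a₀ + (p - 1) := by omega
        rw [Finset.sum_congr rfl e1, betap_sum' hp2 hk1 hk2, e2, fd_mul_add_top hp2]
      calc n * tri (p - 2) + betap p k + Mx p (n + 1)
          = gsum p a k + n * tri (p - 2) + gsum p ((a + k) / p) n := by
            rw [hgs, hdiv, ← ha₀, gsum_succ']; ring
        _ = gsum p a (p * n + k) := (hkey a).symm
        _ ≤ Mx p (p * n + k) := le_Mx hp2 _ _
    rcases le_total (Mx p n + (p - 1 - k)) (Mx p (n + 1)) with h | h
    · rw [max_eq_right h]; exact wit2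
    · rw [max_eq_left h]; exact wit1

theorem betap_succ {p k : ℕ} (hp : 2 ≤ p) (hk0 : 1 ≤ k) (hk : k + 1 ≤ p - 1) :
    betap p (k + 1) = betap p k + (p - 1 - k) := by
  unfold betap
  have h2 : Finset.Ico (p - (k + 1)) (p - 1) = insert (p - 1 - k) (Finset.Ico (p - k) (p - 1)) := by
    rw [show p - (k + 1) = p - 1 - k from by omega, show p - k = (p - 1 - k) + 1 from by omega,
      Finset.Ico_add_one_left_eq_Ioo, Finset.Ioo_insert_left (show p - 1 - k < p - 1 from by omega)]
  rw [h2, Finset.sum_insert (by simp [Finset.mem_Ico]; omega)]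
  omega

theorem betap_top {p : ℕ} (hp : 2 ≤ p) : betap p (p - 1) = tri (p - 2) := by
  unfold betap
  rw [show p - (p - 1) = 1 from by omega, Finset.sum_Ico_eq_sum_range,
    show p - 1 - 1 = p - 2 from by omega, tri_eq, show p - 2 + 1 = p - 1 from by omega,
    show p - 1 = p - 2 + 1 from by omega, Finset.sum_range_succ']
  simp [add_comm]

theorem main_combo {p : ℕ} (hp : 3 ≤ p) (m k : ℕ) (hk0 : 0 < k) (hkp : k < p) :
    Mx p (p * m + k + 1) - Mx p (p * m + k)
      = p - k - 1 - (if Mx p (m + 1) - Mx p m < p - 1 - k then 1 else 0) := by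
  have hp2 : 2 ≤ p := by omega
  set X := Mx p m with hX
  set Y := Mx p (m + 1) with hY
  have hXY : X ≤ Y := Mx_mono hp2 m
  have hA : Mx p (p * m + k) = m * tri (p - 2) + betap p k
      + max (X + (p - 1 - k)) Y := formulaA hp m k hk0 (by omega)
  rcases Nat.lt_or_ge k (p - 1) with hk | hk
  · -- k ≤ p - 2
    have hA' : Mx p (p * m + k + 1) = m * tri (p - 2) + betap p (k + 1)
        + max (X + (p - 1 - (k + 1))) Y := by
      rw [add_assoc]
      exact formulaA hp m (k + 1) (by omega) (by omega)
    have hbs : betap p (k + 1) = betap p k + (p - 1 - k) := betap_succ hp2 hk0 (by omega)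
    rcases Nat.lt_or_ge (Y - X) (p - 1 - k) with hc | hc
    · -- indicator = 1
      rw [if_pos hc]
      have hm1 : max (X + (p - 1 - k)) Y = X + (p - 1 - k) := max_eq_left (by omega)
      have hm2 : max (X + (p - 1 - (k + 1))) Y = X + (p - 1 - (k + 1)) := max_eq_left (by omega)
      rw [hA, hA', hm1, hm2, hbs]
      omega
    · -- indicator = 0
      rw [if_neg (by omega)]
      have hm1 : max (X + (p - 1 - k)) Y = Y := max_eq_right (by omega)
      have hm2 : max (X + (p - 1 - (k + 1))) Y = Y := max_eq_right (by omega)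
      rw [hA, hA', hm1, hm2, hbs]
      omega
  · -- k = p - 1
    have hk' : k = p - 1 := by omega
    subst hk'
    have hB : Mx p (p * m + (p - 1) + 1) = (m + 1) * tri (p - 2) + Y := by
      rw [show p * m + (p - 1) + 1 = p * (m + 1) from by rw [Nat.mul_succ]; omega]
      exact formulaB hp2 (m + 1)
    have hms : (m + 1) * tri (p - 2) = m * tri (p - 2) + tri (p - 2) := Nat.succ_mul _ _
    have hm1 : max (X + (p - 1 - (p - 1))) Y = Y :=by
      rw [show p - 1 - (p - 1) = 0 from by omega]
      exact max_eq_right (by omega)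
    have hbt := betap_top hp2
    rw [if_neg (by omega), hA, hB, hm1, hbt]
    omega

/-- base-p digits of a natural number, least significant first -/
def enc (p b : ℕ) : ℕ → ℕ := fun i => b / p ^ i % p

theorem enc_lt {p : ℕ} (hp : 2 ≤ p) (b i : ℕ) : enc p b i < p :=
  Nat.mod_lt _ (by omega)

theorem enc_zero_of_lt {p b i : ℕ} (h : b < p ^ i) : enc p b i = 0 := by
  simp [enc, Nat.div_eq_of_lt h]

theorem enc_ne_top {p : ℕ} (hp : 2 ≤ p) (b : ℕ) : enc p b b ≠ p - 1 := by
  rw [enc_zero_of_lt (Nat.lt_pow_self (n := b) (by omega))]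
  omega

theorem firstNot_enc_le {p : ℕ} (hp : 2 ≤ p) {b N : ℕ} (h : b < p ^ N) :
    firstNot p (enc p b) ≤ N := by
  apply Nat.sInf_le
  show enc p b N ≠ p - 1
  rw [enc_zero_of_lt h]; omega

theorem firstNot_enc_mem {p : ℕ} (hp : 2 ≤ p) (b : ℕ) :
    enc p b (firstNot p (enc p b)) ≠ p - 1 :=
  Nat.sInf_mem (⟨b, enc_ne_top hp b⟩ : {i | enc p b i ≠ p - 1}.Nonempty)

theorem enc_succ (p b i : ℕ) : enc p b (i + 1) = enc p (b / p) i := by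
  simp [enc, Nat.div_div_eq_div_mul, pow_succ]
  ring_nf

theorem firstNot_shift {p : ℕ} (hp : 2 ≤ p) {b : ℕ} (h : b % p = p - 1) :
    firstNot p (enc p b) = firstNot p (enc p (b / p)) + 1 := by
  have h0 : enc p b 0 = b % p := by simp [enc]
  have hmem := firstNot_enc_mem hp b
  have hmem' := firstNot_enc_mem hp (b / p)
  set F := firstNot p (enc p b) with hF
  set F' := firstNot p (enc p (b / p)) with hF'
  have hFne : F ≠ 0 := by
    intro h2
    rw [h2, h0] at hmem; exact hmem h
  apply le_antisymm
  · apply Nat.sInf_le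
    show enc p b (F' + 1) ≠ p - 1
    rw [enc_succ]; exact hmem'
  · have h3 : 1 ≤ F := by omega
    have h4 : enc p (b / p) (F - 1) ≠ p - 1 := by
      rw [← enc_succ, show F - 1 + 1 = F from by omega]; exact hmem
    have h5 : F' ≤ F - 1 := Nat.sInf_le h4
    omega

theorem phi_enc {p : ℕ} (hp : 2 ≤ p) (b : ℕ) : phi p (enc p b) = fd p b := by
  induction b using Nat.strong_induction_on with
  | _ b ih =>
    by_cases h : b % p = p - 1
    · have hb : 0 < b := by
        rcases Nat.eq_zero_or_pos b with h0 | h0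
        · subst h0; simp at h; omega
        · exact h0
      rw [fd_of_eq hp h, ← ih (b / p) (Nat.div_lt_self hb hp)]
      unfold phi
      rw [firstNot_shift hp h, enc_succ]
    · rw [fd_of_ne h]
      have h0 : enc p b 0 = b % p := by simp [enc]
      have : firstNot p (enc p b) = 0 :=
        Nat.sInf_eq_zero.mpr (Or.inl (by rw [Set.mem_setOf_eq, h0]; exact h))
      unfold phi
      rw [this, h0]

theorem low_run {p : ℕ} (hp : 2 ≤ p) (b : ℕ) :
    ∀ i < firstNot p (enc p b), enc p b i = p - 1 := by
  intro i hi
  by_contra h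
  have h2 : i ∈ {j | enc p b j ≠ p - 1} := h
  have := Nat.sInf_le h2
  unfold firstNot at hi
  omega

theorem mod_pow_of_run {p b : ℕ} (hp : 2 ≤ p) :
    ∀ F, (∀ i < F, enc p b i = p - 1) → b % p ^ F = p ^ F - 1 := by
  intro F
  induction F with
  | zero => simp [Nat.mod_one]
  | succ F ih =>
    intro h
    rw [Nat.mod_pow_succ, ih (fun i hi => h i (by omega))]
    have hd : enc p b F = p - 1 := h F (by omega)
    unfold enc at hd
    rw [hd]
    have h1 : 0 < p ^ F := pow_pos (by omega) F
    have h2 : p ^ F * (p - 1) + p ^ F = p ^ F * p := by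
      calc p ^ F * (p - 1) + p ^ F = p ^ F * ((p - 1) + 1) := by ring
        _ = p ^ F * p := by rw [show p - 1 + 1 = p from by omega]
    have h3 : p ^ (F + 1) = p ^ F * p := pow_succ p F
    omega

theorem odo_enc {p : ℕ} (hp : 2 ≤ p) (b : ℕ) : odo p (enc p b) = enc p (b + 1) := by
  have hp0 : 0 < p := by omega
  obtain ⟨F, hF⟩ : ∃ F, firstNot p (enc p b) = F := ⟨_, rfl⟩
  have hpF : 0 < p ^ F := pow_pos hp0 F
  have hdne : b / p ^ F % p ≠ p - 1 := by
    have := firstNot_enc_mem hp b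
    rwa [hF] at this
  have hdlt : b / p ^ F % p < p := Nat.mod_lt _ hp0
  have hrun : b % p ^ F = p ^ F - 1 := by
    apply mod_pow_of_run hp F
    intro i hi
    exact low_run hp b i (by rw [hF]; exact hi)
  have hdm := Nat.div_add_mod b (p ^ F)
  have hb1 : b + 1 = p ^ F * (b / p ^ F + 1) := by rw [Nat.mul_succ]; omega
  have hdm2 := Nat.div_add_mod (b / p ^ F) p
  have hq1 : (b / p ^ F + 1) % p = b / p ^ F % p + 1 := by
    rw [show b / p ^ F + 1 = (b / p ^ F % p + 1) + p * (b / p ^ F / p) from by omega,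
      Nat.add_mul_mod_self_left, Nat.mod_eq_of_lt (by omega)]
  have hq1d : (b / p ^ F + 1) / p = b / p ^ F / p := by
    rw [show b / p ^ F + 1 = (b / p ^ F % p + 1) + p * (b / p ^ F / p) from by omega,
      Nat.add_mul_div_left _ _ hp0, Nat.div_eq_of_lt (by omega)]
    omega
  funext i
  show (if i < firstNot p (enc p b) then 0
      else if i = firstNot p (enc p b) then enc p b i + 1 else enc p b i) = enc p (b + 1) i
  rw [hF]
  rcases lt_trichotomy i F with hi | hi | hi
  · rw [if_pos hi]
    have hsplit : p ^ F = p ^ i * p ^ (F - i) := by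
      rw [← pow_add]; congr 1; omega
    have h0 : enc p (b + 1) i = 0 := by
      unfold enc
      rw [hb1, hsplit, mul_assoc, Nat.mul_div_cancel_left _ (pow_pos hp0 i),
        show p ^ (F - i) = p * p ^ (F - i - 1) from by rw [← pow_succ']; congr 1; omega,
        mul_assoc, Nat.mul_mod_right]
    omega
  · rw [if_neg (by omega), if_pos hi, hi]
    show enc p b F + 1 = enc p (b + 1) F
    unfold enc
    rw [hb1, Nat.mul_div_cancel_left _ hpF, hq1]
  · rw [if_neg (by omega), if_neg (by omega)]
    show enc p b i = enc p (b + 1) i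
    unfold enc
    have hsplit : p ^ i = p ^ F * p ^ (i - F) := by
      rw [← pow_add]; congr 1; omega
    have hsplit2 : p ^ (i - F) = p * p ^ (i - F - 1) := by
      rw [← pow_succ']; congr 1; omega
    have h1 : (b + 1) / p ^ i = (b / p ^ F + 1) / p ^ (i - F) := by
      rw [hb1, hsplit, Nat.mul_div_mul_left _ _ hpF]
    have h2 : b / p ^ i = b / p ^ F / p ^ (i - F) := by
      rw [hsplit]
      exact (Nat.div_div_eq_div_mul _ _ _).symm
    have h3 : (b / p ^ F + 1) / p ^ (i - F) = b / p ^ F / p ^ (i - F) := by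
      rw [hsplit2, ← Nat.div_div_eq_div_mul, ← Nat.div_div_eq_div_mul, hq1d]
    rw [h1, h3, h2]

theorem odo_iter_enc {p : ℕ} (hp : 2 ≤ p) (b j : ℕ) :
    (odo p)^[j] (enc p b) = enc p (b + j) := by
  induction j with
  | zero => simp
  | succ j ih =>
    rw [Function.iterate_succ_apply', ih, odo_enc hp, ← add_assoc]

theorem phiSum_enc {p : ℕ} (hp : 2 ≤ p) (b m : ℕ) :
    phiSum p m (enc p b) = ∑ j ∈ Finset.range m, fd p (b + j) := by
  unfold phiSum
  apply Finset.sum_congr rfl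
  intro j _
  rw [odo_iter_enc hp, phi_enc hp]

theorem firstNot_congr {p N : ℕ} {x y : ℕ → ℕ} (hagree : ∀ i ≤ N, x i = y i)
    (hle : firstNot p x ≤ N) (hmem : x (firstNot p x) ≠ p - 1) :
    firstNot p y = firstNot p x := by
  have hyx : y (firstNot p x) ≠ p - 1 := by rw [← hagree _ hle]; exact hmem
  have h1 : firstNot p y ≤ firstNot p x := Nat.sInf_le hyx
  have hyne : {i | y i ≠ p - 1}.Nonempty := ⟨firstNot p x, hyx⟩
  have hmemy : y (firstNot p y) ≠ p - 1 := Nat.sInf_mem hyne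
  have hxy : x (firstNot p y) ≠ p - 1 := by rw [hagree _ (by omega)]; exact hmemy
  have h2 : firstNot p x ≤ firstNot p y := Nat.sInf_le hxy
  omega

theorem odo_congr {p N : ℕ} {x y : ℕ → ℕ} (hagree : ∀ i ≤ N, x i = y i)
    (hle : firstNot p x ≤ N) (hmem : x (firstNot p x) ≠ p - 1) :
    ∀ i ≤ N, odo p x i = odo p y i := by
  intro i hi
  unfold odo
  rw [firstNot_congr hagree hle hmem]
  rcases lt_trichotomy i (firstNot p x) with h | h | h
  · rw [if_pos h, if_pos h]
  · rw [if_neg (by omega), if_pos h, if_neg (by omega), if_pos h, hagree i hi]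
  · rw [if_neg (by omega), if_neg (by omega), if_neg (by omega), if_neg (by omega), hagree i hi]

theorem phiSum_succ (p m : ℕ) (x : ℕ → ℕ) :
    phiSum p (m + 1) x = phi p x + phiSum p m (odo p x) := by
  unfold phiSum
  rw [Finset.sum_range_succ']
  simp only [Function.iterate_succ_apply, Function.iterate_zero_apply]
  rw [add_comm]

theorem locality {p m N : ℕ} : ∀ {x y : ℕ → ℕ}, (∀ i ≤ N, x i = y i) →
    (∀ j < m, firstNot p ((odo p)^[j] x) ≤ N
      ∧ ((odo p)^[j] x) (firstNot p ((odo p)^[j] x)) ≠ p - 1) →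
    phiSum p m x = phiSum p m y
      ∧ (∀ j < m, firstNot p ((odo p)^[j] y) = firstNot p ((odo p)^[j] x))
      ∧ (∀ j < m, ∀ i ≤ N, ((odo p)^[j] x) i = ((odo p)^[j] y) i) := by
  induction m with
  | zero =>
    intro x y _ _
    refine ⟨by simp [phiSum], by omega, by omega⟩
  | succ m ih =>
    intro x y hagree hreads
    have h0 := hreads 0 (by omega)
    simp only [Function.iterate_zero_apply] at h0
    have hFN := firstNot_congr hagree h0.1 h0.2
    have hagree' : ∀ i ≤ N, odo p x i = odo p y i := odo_congr hagree h0.1 h0.2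
    have hreads' : ∀ j < m, firstNot p ((odo p)^[j] (odo p x)) ≤ N
        ∧ ((odo p)^[j] (odo p x)) (firstNot p ((odo p)^[j] (odo p x))) ≠ p - 1 := by
      intro j hj
      have := hreads (j + 1) (by omega)
      rwa [Function.iterate_succ_apply] at this
    obtain ⟨hsum, hfn, hag⟩ := ih hagree' hreads'
    refine ⟨?_, ?_, ?_⟩
    · rw [phiSum_succ, phiSum_succ, hsum]
      congr 1
      unfold phi
      rw [hFN, ← hagree _ h0.1]
    · intro j hj
      cases j with
      | zero => simpa using hFN
      | succ j =>
        have := hfn j (by omega)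
        rwa [← Function.iterate_succ_apply, ← Function.iterate_succ_apply] at this
    · intro j hj i hi
      cases j with
      | zero => simpa using hagree i hi
      | succ j =>
        have := hag j (by omega) i hi
        rwa [← Function.iterate_succ_apply, ← Function.iterate_succ_apply] at this

theorem digit_eq (p : ℕ) (u : ℝ) (i : ℕ) : digitsOf p u i = ⌊u * (p : ℝ) ^ (i + 1)⌋₊ % p := by
  unfold digitsOf
  rw [Int.floor_toNat]

theorem vfloor_div {p : ℕ} (hp : 0 < p) (u : ℝ) (n : ℕ) :
    ⌊u * (p : ℝ) ^ (n + 1)⌋₊ / p = ⌊u * (p : ℝ) ^ n⌋₊ := by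
  rw [← Nat.floor_div_natCast]
  congr 1
  have : (p : ℝ) ≠ 0 := by positivity
  field_simp
  ring

theorem vfloor_rec {p : ℕ} (hp : 0 < p) (u : ℝ) (n : ℕ) :
    ⌊u * (p : ℝ) ^ (n + 1)⌋₊ = p * ⌊u * (p : ℝ) ^ n⌋₊ + digitsOf p u n := by
  have h1 := Nat.div_add_mod (⌊u * (p : ℝ) ^ (n + 1)⌋₊) p
  rw [vfloor_div hp] at h1
  rw [digit_eq]
  omega

theorem digits_not_all_top {p : ℕ} (hp : 2 ≤ p) {u : ℝ} (hu0 : 0 ≤ u) (hu1 : u < 1)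
    (K : ℕ) : ∃ i, K ≤ i ∧ digitsOf p u i ≠ p - 1 := by
  by_contra hcon
  push_neg at hcon
  have hp0 : 0 < p := by omega
  have hpR : (1 : ℝ) < (p : ℝ) := by exact_mod_cast (by omega : 1 < p)
  have hrec : ∀ n, K ≤ n →
      ⌊u * (p : ℝ) ^ (n + 1)⌋₊ + 1 = p * (⌊u * (p : ℝ) ^ n⌋₊ + 1) := by
    intro n hn
    have h1 := vfloor_rec hp0 u n
    have h2 := hcon n hn
    have h3 : p * (⌊u * (p : ℝ) ^ n⌋₊ + 1) = p * ⌊u * (p : ℝ) ^ n⌋₊ + p := by ring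
    omega
  have hpow : ∀ n, ⌊u * (p : ℝ) ^ (K + n)⌋₊ + 1 = p ^ n * (⌊u * (p : ℝ) ^ K⌋₊ + 1) := by
    intro n
    induction n with
    | zero => simp
    | succ n ih =>
      simp only [← add_assoc]
      rw [hrec (K + n) (by omega), ih, pow_succ]
      ring
  have hub : u * (p : ℝ) ^ K < (⌊u * (p : ℝ) ^ K⌋₊ : ℝ) + 1 := Nat.lt_floor_add_one _
  have hcpos : (0 : ℝ) < ((⌊u * (p : ℝ) ^ K⌋₊ : ℝ) + 1) - u * (p : ℝ) ^ K := by linarith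
  obtain ⟨n, hn⟩ := pow_unbounded_of_one_lt
    (1 / (((⌊u * (p : ℝ) ^ K⌋₊ : ℝ) + 1) - u * (p : ℝ) ^ K)) hpR
  have hlb : ((⌊u * (p : ℝ) ^ (K + n)⌋₊ : ℕ) : ℝ) ≤ u * (p : ℝ) ^ (K + n) :=
    Nat.floor_le (by positivity)
  have h2 : ((⌊u * (p : ℝ) ^ (K + n)⌋₊ : ℕ) : ℝ)
      = (p : ℝ) ^ n * ((⌊u * (p : ℝ) ^ K⌋₊ : ℝ) + 1) - 1 := by
    have := hpow n
    have hcast := congrArg (fun t : ℕ => (t : ℝ)) this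
    push_cast at hcast
    linarith
  have h3 : u * (p : ℝ) ^ (K + n) = (u * (p : ℝ) ^ K) * (p : ℝ) ^ n := by
    rw [pow_add]; ring
  rw [h2, h3] at hlb
  have hple : (0 : ℝ) < (p : ℝ) ^ n := by positivity
  rw [div_lt_iff₀ hcpos] at hn
  nlinarith

theorem enc_sum {p : ℕ} (hp : 2 ≤ p) :
    ∀ (n : ℕ) (c : ℕ → ℕ), (∀ i, c i < p) →
      (∑ i ∈ Finset.range n, c i * p ^ i) < p ^ n
      ∧ ∀ j < n, enc p (∑ i ∈ Finset.range n, c i * p ^ i) j = c j := by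
  intro n
  induction n with
  | zero => intro c hc; simp [enc]
  | succ n ih =>
    intro c hc
    have hsp : ∑ i ∈ Finset.range (n + 1), c i * p ^ i
        = c 0 + p * ∑ i ∈ Finset.range n, c (i + 1) * p ^ i := by
      rw [Finset.sum_range_succ',
        Finset.sum_congr rfl (fun i _ => show c (i + 1) * p ^ (i + 1) = p * (c (i + 1) * p ^ i) from by ring),
        ← Finset.mul_sum]
      simp [pow_zero]
      omega
    obtain ⟨hb, hd⟩ := ih (fun i => c (i + 1)) (fun i => hc (i + 1))
    constructor
    · rw [hsp, pow_succ]
      have h0 := hc 0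
      nlinarith
    · intro j hj
      cases j with
      | zero =>
        show _ % p = c 0
        rw [hsp]
        simp only [pow_zero, Nat.div_one]
        rw [Nat.add_mul_mod_self_left, Nat.mod_eq_of_lt (hc 0)]
      | succ j =>
        show _ / p ^ (j + 1) % p = c (j + 1)
        rw [hsp, pow_succ']
        rw [← Nat.div_div_eq_div_mul]
        have : (c 0 + p * ∑ i ∈ Finset.range n, c (i + 1) * p ^ i) / p
            = ∑ i ∈ Finset.range n, c (i + 1) * p ^ i := by
          rw [Nat.add_mul_div_left _ _ (by omega : 0 < p), Nat.div_eq_of_lt (hc 0)]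
          omega
        rw [this]
        exact hd j (by omega)

/-- the value whose first N+1 digits (most significant first in base-p fraction) are c 0 ... c N -/
def bigB (p N : ℕ) (c : ℕ → ℕ) : ℕ := ∑ i ∈ Finset.range (N + 1), c i * p ^ (N - i)

theorem bigB_eq (p N : ℕ) (c : ℕ → ℕ) :
    bigB p N c = ∑ i ∈ Finset.range (N + 1), c (N - i) * p ^ i := by
  unfold bigB
  rw [← Finset.sum_range_reflect]
  apply Finset.sum_congr rfl
  intro i hi
  have hi' : i < N + 1 := Finset.mem_range.mp hi
  congr 2 <;> omega

theorem bigB_lt {p : ℕ} (hp : 2 ≤ p) (N : ℕ) (c : ℕ → ℕ) (hc : ∀ i, c i < p) :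
    bigB p N c < p ^ (N + 1) := by
  rw [bigB_eq]
  exact (enc_sum hp (N + 1) (fun i => c (N - i)) (fun i => hc _)).1

theorem bigB_digit {p : ℕ} (hp : 2 ≤ p) (N : ℕ) (c : ℕ → ℕ) (hc : ∀ i, c i < p)
    {i : ℕ} (hi : i ≤ N) : bigB p N c / p ^ (N - i) % p = c i := by
  have h := (enc_sum hp (N + 1) (fun j => c (N - j)) (fun j => hc _)).2 (N - i) (by omega)
  rw [← bigB_eq] at h
  have h2 : N - (N - i) = i := by omega
  rw [h2] at h
  exact h

theorem dig_on_interval {p : ℕ} (hp : 2 ≤ p) (N : ℕ) (c : ℕ → ℕ) (hc : ∀ i, c i < p)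
    {u : ℝ} (h1 : (bigB p N c : ℝ) / (p : ℝ) ^ (N + 1) ≤ u)
    (h2 : u < ((bigB p N c : ℝ) + 1) / (p : ℝ) ^ (N + 1)) :
    ∀ i ≤ N, digitsOf p u i = c i := by
  have hp0 : 0 < p := by omega
  have hpR : (0 : ℝ) < (p : ℝ) := by positivity
  intro i hi
  rw [digit_eq]
  set B := bigB p N c with hB
  set q : ℕ := p ^ (N - i) with hq
  have hqR : (0 : ℝ) < (q : ℝ) := by positivity
  have hsplit : (p : ℝ) ^ (N + 1) = (p : ℝ) ^ (i + 1) * (q : ℝ) := by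
    rw [hq]
    push_cast
    rw [← pow_add]
    congr 1
    omega
  have hfl : ⌊u * (p : ℝ) ^ (i + 1)⌋₊ = B / q := by
    have hBq : ((B / q : ℕ) : ℝ) ≤ u * (p : ℝ) ^ (i + 1) := by
      calc ((B / q : ℕ) : ℝ) ≤ (B : ℝ) / (q : ℝ) := Nat.cast_div_le
        _ ≤ u * (p : ℝ) ^ (i + 1) := by
            rw [div_le_iff₀ hqR]
            have hpi : (0 : ℝ) < (p : ℝ) ^ (i + 1) := by positivity
            rw [div_le_iff₀ (by positivity : (0:ℝ) < (p : ℝ) ^ (N + 1))] at h1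
            rw [hsplit] at h1
            nlinarith
    have hBq2 : u * (p : ℝ) ^ (i + 1) < ((B / q : ℕ) : ℝ) + 1 := by
      have hn : B + 1 ≤ q * (B / q) + q := by
        have := Nat.mod_lt B (show 0 < q from pow_pos hp0 _)
        have := Nat.div_add_mod B q
        omega
      have hnR : ((B : ℝ) + 1) ≤ (q : ℝ) * ((B / q : ℕ) : ℝ) + (q : ℝ) := by exact_mod_cast hn
      have hpi : (0 : ℝ) < (p : ℝ) ^ (i + 1) := by positivity
      rw [lt_div_iff₀ (by positivity : (0:ℝ) < (p : ℝ) ^ (N + 1))] at h2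
      rw [hsplit] at h2
      calc u * (p : ℝ) ^ (i + 1) < ((B : ℝ) + 1) / (q : ℝ) := by
            rw [lt_div_iff₀ hqR]; nlinarith
        _ ≤ ((B / q : ℕ) : ℝ) + 1 := by
            rw [div_le_iff₀ hqR]; nlinarith
    have hw : (0 : ℝ) ≤ u * (p : ℝ) ^ (i + 1) := by
      have : (0 : ℝ) ≤ (B : ℝ) / (p : ℝ) ^ (N + 1) := by positivity
      nlinarith [this.trans h1, (by positivity : (0:ℝ) < (p : ℝ) ^ (i + 1))]
    exact (Nat.floor_eq_iff hw).mpr ⟨hBq, hBq2⟩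
  rw [hfl]
  exact bigB_digit hp N c hc hi


theorem phiSum_enc' {p : ℕ} (hp : 2 ≤ p) (b m : ℕ) :
    phiSum p m (enc p b) = gsum p b m := by
  rw [phiSum_enc hp]; rfl

theorem digitsOf_measurable (p : ℕ) : Measurable (digitsOf p) := by
  apply measurable_pi_lambda
  intro i
  exact (measurable_from_top (f := fun z : ℤ => z.toNat % p)).comp
    (Int.measurable_floor.comp (measurable_id.mul_const _))

theorem digitsOf_lt {p : ℕ} (hp : 0 < p) (u : ℝ) (i : ℕ) : digitsOf p u i < p :=
  Nat.mod_lt _ hp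

theorem cyl_measurable (p b N : ℕ) :
    MeasurableSet {x : ℕ → ℕ | ∀ i ≤ N, x i = enc p b i} := by
  have h : {x : ℕ → ℕ | ∀ i ≤ N, x i = enc p b i}
      = ⋂ i ∈ Set.Iic N, (fun x : ℕ → ℕ => x i) ⁻¹' {enc p b i} := by
    ext x
    simp [Set.mem_iInter, Set.mem_Iic]
  rw [h]
  exact MeasurableSet.biInter (Set.to_countable _)
    (fun i _ => measurable_pi_apply i (measurableSet_singleton _))

theorem reads_enc {p : ℕ} (hp : 2 ≤ p) (m b N : ℕ) (hN : b + m ≤ p ^ N) :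
    ∀ j < m, firstNot p ((odo p)^[j] (enc p b)) ≤ N
      ∧ ((odo p)^[j] (enc p b)) (firstNot p ((odo p)^[j] (enc p b))) ≠ p - 1 := by
  intro j hj
  rw [odo_iter_enc hp]
  exact ⟨firstNot_enc_le hp (by omega), firstNot_enc_mem hp _⟩

theorem lam_set_eq (p : ℕ) {C : Set (ℕ → ℕ)} (hC : MeasurableSet C) :
    lam p C = volume (digitsOf p ⁻¹' C ∩ Set.Ico (0 : ℝ) 1) := by
  unfold lam
  rw [Measure.map_apply (digitsOf_measurable p) hC,
    Measure.restrict_apply (digitsOf_measurable p hC)]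

theorem mem_support {p : ℕ} (hp : 3 ≤ p) (m b : ℕ) : pim p m (gsum p b m) ≠ 0 := by
  have hp2 : 2 ≤ p := by omega
  have hNp := Nat.lt_pow_self (n := b + m + 1) (show 1 < p from by omega)
  have hreads := reads_enc hp2 m b (b + m + 1) (by omega)
  have hsub : {x : ℕ → ℕ | ∀ i ≤ b + m + 1, x i = enc p b i}
      ⊆ {x | phiSum p m x = gsum p b m} := by
    intro x hx
    have hagree : ∀ i ≤ b + m + 1, enc p b i = x i := fun i hi => (hx i hi).symm
    have h := (locality hagree hreads).1
    show phiSum p m x = gsum p b m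
    rw [← h, phiSum_enc' hp2]
  have hmeas := cyl_measurable p b (b + m + 1)
  have hmap := lam_set_eq p hmeas
  set N := b + m + 1 with hNdef
  set B := bigB p N (enc p b) with hBdef
  have hBlt : B < p ^ (N + 1) := bigB_lt hp2 N (enc p b) (fun i => enc_lt hp2 b i)
  have hppos : (0 : ℝ) < (p : ℝ) ^ (N + 1) := by positivity
  have hIco : Set.Ico ((B : ℝ) / (p : ℝ) ^ (N + 1)) (((B : ℝ) + 1) / (p : ℝ) ^ (N + 1))
      ⊆ digitsOf p ⁻¹' {x : ℕ → ℕ | ∀ i ≤ N, x i = enc p b i} ∩ Set.Ico (0 : ℝ) 1 := by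
    rintro u ⟨hu1, hu2⟩
    refine ⟨fun i hi => dig_on_interval hp2 N (enc p b) (fun i => enc_lt hp2 b i) hu1 hu2 i hi,
      ?_, ?_⟩
    · have : (0 : ℝ) ≤ (B : ℝ) / (p : ℝ) ^ (N + 1) := by positivity
      linarith
    · have hc : ((B : ℝ) + 1) ≤ (p : ℝ) ^ (N + 1) := by
        exact_mod_cast Nat.succ_le_of_lt hBlt
      have : ((B : ℝ) + 1) / (p : ℝ) ^ (N + 1) ≤ 1 := by
        rw [div_le_one hppos]; exact hc
      linarith
  have hvolpos : (0 : ℝ≥0∞) < volume (Set.Ico ((B : ℝ) / (p : ℝ) ^ (N + 1))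
      (((B : ℝ) + 1) / (p : ℝ) ^ (N + 1))) := by
    rw [Real.volume_Ico]
    apply ENNReal.ofReal_pos.mpr
    rw [div_sub_div_same]
    rw [show (B : ℝ) + 1 - (B : ℝ) = 1 from by ring]
    positivity
  have hchain : volume (Set.Ico ((B : ℝ) / (p : ℝ) ^ (N + 1))
      (((B : ℝ) + 1) / (p : ℝ) ^ (N + 1))) ≤ pim p m (gsum p b m) := by
    calc volume (Set.Ico ((B : ℝ) / (p : ℝ) ^ (N + 1)) (((B : ℝ) + 1) / (p : ℝ) ^ (N + 1)))
        ≤ volume (digitsOf p ⁻¹' {x : ℕ → ℕ | ∀ i ≤ N, x i = enc p b i} ∩ Set.Ico (0 : ℝ) 1) :=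
          measure_mono hIco
      _ = lam p {x : ℕ → ℕ | ∀ i ≤ N, x i = enc p b i} := hmap.symm
      _ ≤ lam p {x | phiSum p m x = gsum p b m} := measure_mono hsub
      _ = pim p m (gsum p b m) := rfl
  intro h0
  rw [h0] at hchain
  exact absurd (lt_of_lt_of_le hvolpos hchain) (lt_irrefl 0)

/-- property: arbitrarily large non-(p-1) digits -/
def Qprop (p : ℕ) (x : ℕ → ℕ) : Prop := ∀ K, ∃ i, K ≤ i ∧ x i ≠ p - 1

theorem Qprop_mem {p : ℕ} {x : ℕ → ℕ} (hQ : Qprop p x) :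
    x (firstNot p x) ≠ p - 1 := by
  obtain ⟨i, _, hi⟩ := hQ 0
  exact Nat.sInf_mem (⟨i, hi⟩ : {i | x i ≠ p - 1}.Nonempty)

theorem Qprop_odo {p : ℕ} {x : ℕ → ℕ} (hQ : Qprop p x) : Qprop p (odo p x) := by
  intro K
  obtain ⟨i, hKi, hi⟩ := hQ (max K (firstNot p x + 1))
  refine ⟨i, by omega, ?_⟩
  unfold odo
  rw [if_neg (by omega), if_neg (by omega)]
  exact hi

theorem Qprop_iter {p : ℕ} {x : ℕ → ℕ} (hQ : Qprop p x) (j : ℕ) :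
    Qprop p ((odo p)^[j] x) := by
  induction j with
  | zero => simpa using hQ
  | succ j ih =>
    rw [Function.iterate_succ_apply']
    exact Qprop_odo ih

theorem trunc_exists {p m : ℕ} (hp : 2 ≤ p) {x : ℕ → ℕ} (hx : ∀ i, x i < p)
    (hQ : Qprop p x) :
    ∃ b N, (∀ i ≤ N, x i = enc p b i)
      ∧ (∀ j < m, firstNot p ((odo p)^[j] x) ≤ N
          ∧ ((odo p)^[j] x) (firstNot p ((odo p)^[j] x)) ≠ p - 1)
      ∧ phiSum p m x = gsum p b m := by
  set N := Finset.sup (Finset.range m) (fun j => firstNot p ((odo p)^[j] x)) with hNdef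
  set b := ∑ i ∈ Finset.range (N + 1), x i * p ^ i with hbdef
  have henc : ∀ i ≤ N, x i = enc p b i := by
    intro i hi
    exact ((enc_sum hp (N + 1) x hx).2 i (by omega)).symm
  have hreads : ∀ j < m, firstNot p ((odo p)^[j] x) ≤ N
      ∧ ((odo p)^[j] x) (firstNot p ((odo p)^[j] x)) ≠ p - 1 := by
    intro j hj
    refine ⟨?_, Qprop_mem (Qprop_iter hQ j)⟩
    rw [hNdef]
    exact Finset.le_sup (f := fun j => firstNot p ((odo p)^[j] x)) (Finset.mem_range.mpr hj)
  refine ⟨b, N, henc, hreads, ?_⟩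
  have h := (locality henc hreads).1
  rw [h, phiSum_enc' hp]

theorem support_eq {p : ℕ} (hp : 3 ≤ p) (m : ℕ) :
    {j | pim p m j ≠ 0} = Set.range (fun b => gsum p b m) := by
  have hp2 : 2 ≤ p := by omega
  apply Set.Subset.antisymm
  · intro j hj
    by_contra hcon
    have hnotin : ∀ b, gsum p b m ≠ j := fun b hb => hcon ⟨b, hb⟩
    classical
    set U : Set (ℕ → ℕ) := ⋃ (b : ℕ) (N : ℕ)
      (_ : ∀ j' < m, firstNot p ((odo p)^[j'] (enc p b)) ≤ N
          ∧ ((odo p)^[j'] (enc p b)) (firstNot p ((odo p)^[j'] (enc p b))) ≠ p - 1),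
      {x : ℕ → ℕ | ∀ i ≤ N, x i = enc p b i} with hUdef
    have hUmeas : MeasurableSet U := by
      apply MeasurableSet.iUnion
      intro b
      apply MeasurableSet.iUnion
      intro N
      apply MeasurableSet.iUnion
      intro _
      exact cyl_measurable p b N
    have hdisj : {x | phiSum p m x = j} ⊆ Uᶜ := by
      intro x hx hxU
      rw [hUdef, Set.mem_iUnion] at hxU
      obtain ⟨b, hxU⟩ := hxU
      rw [Set.mem_iUnion] at hxU
      obtain ⟨N, hxU⟩ := hxU
      rw [Set.mem_iUnion] at hxU
      obtain ⟨hgood, hcyl⟩ := hxU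
      have hagree : ∀ i ≤ N, enc p b i = x i := fun i hi => (hcyl i hi).symm
      have h := (locality hagree hgood).1
      apply hnotin b
      rw [← phiSum_enc' hp2, h]
      exact hx
    have hall : ∀ u : ℝ, u ∈ Set.Ico (0 : ℝ) 1 → digitsOf p u ∈ U := by
      intro u hu
      have hQ : Qprop p (digitsOf p u) := fun K => digits_not_all_top hp2 hu.1 hu.2 K
      obtain ⟨b, N, henc, hreads, hval⟩ :=
        trunc_exists (m := m) hp2 (fun i => digitsOf_lt (by omega) u i) hQ
      obtain ⟨_, hfn, hag⟩ := locality henc hreads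
      rw [hUdef, Set.mem_iUnion]
      refine ⟨b, ?_⟩
      rw [Set.mem_iUnion]
      refine ⟨N, ?_⟩
      rw [Set.mem_iUnion]
      refine ⟨?_, fun i hi => henc i hi⟩
      intro j' hj'
      constructor
      · rw [hfn j' hj']
        exact (hreads j' hj').1
      · rw [hfn j' hj', ← hag j' hj' _ (hreads j' hj').1]
        exact (hreads j' hj').2
    have h1 : pim p m j ≤ lam p Uᶜ := measure_mono hdisj
    have h2 : lam p Uᶜ = volume (digitsOf p ⁻¹' Uᶜ ∩ Set.Ico (0 : ℝ) 1) :=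
      lam_set_eq p hUmeas.compl
    have h3 : digitsOf p ⁻¹' Uᶜ ∩ Set.Ico (0 : ℝ) 1 = ∅ := by
      ext u
      simp only [Set.mem_inter_iff, Set.mem_preimage, Set.mem_compl_iff, Set.mem_empty_iff_false,
        iff_false, not_and]
      intro hpre hu
      exact hpre (hall u hu)
    rw [h2, h3] at h1
    simp at h1
    exact hj h1
  · rintro j ⟨b, rfl⟩
    exact mem_support hp m b

theorem D_eq_Mx {p : ℕ} (hp : 3 ≤ p) (n : ℕ) : D p n = Mx p n := by
  unfold D Mx
  rw [support_eq hp n]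


/-- with `S_m = D_{m+1} - D_m`, for every `m ≥ 0` and `0 < k < p`,
`S_{pm+k} = p - k - 1 - 𝟙{S_m < p-1-k}`. -/
theorem statement_10 (p : ℕ) (hp : 3 ≤ p) (m k : ℕ) (hk0 : 0 < k) (hkp : k < p) :
    Sseq p (p * m + k) =
      p - k - 1 - (if Sseq p m < p - 1 - k then 1 else 0) := by
  unfold Sseq
  simp only [D_eq_Mx hp]
  exact main_combo hp m k hk0 hkp

end Chacon
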